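/- For a finite group G, the group of singular orbit data 𝔹_G is the trivial group if and only if G is the trivial group or G is cyclic of order 2. -/

import Mathlib

namespace SingOrbit

variable (G : Type*) [Group G]

/-- The map from conjugacy classes to the abelianization. -/
def classAb : ConjClasses G → Additive (Abelianization G) :=
  Quotient.lift (fun g : G => Additive.ofMul (Abelianization.of g)) <| by
    intro a b hab
    obtain ⟨c, hc⟩ := isConj_iff.mp (hab : IsConj a b)
    subst hc
    show Additive.ofMul (Abelianization.of a) = Additive.ofMul (Abelianization.of (c * a * c⁻¹))
    congr 1
    rw [map_mul, map_mul, map_inv, mul_comm (Abelianization.of c) (Abelianization.of a),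
      mul_inv_cancel_right]

/-- Nontrivial conjugacy classes. -/
def NCC := {c : ConjClasses G // c ≠ 1}

/-- The homomorphism `φ` from the free abelian group on the nontrivial conjugacy classes
to the abelianization, sending a conjugacy class to the image of any representative. -/
noncomputable def phi : FreeAbelianGroup (NCC G) →+ Additive (Abelianization G) :=
  FreeAbelianGroup.lift fun c => classAb G c.1

/-- The basis element of the free abelian group corresponding to a conjugacy class
(`0` for the trivial class). -/
noncomputable def clsC (c : ConjClasses G) : FreeAbelianGroup (NCC G) :=
  letI := Classical.dec (c = 1)
  if h : c = 1 then 0 else FreeAbelianGroup.of ⟨c, h⟩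

/-- The basis element corresponding to the conjugacy class of a group element. -/
noncomputable def clsF (x : G) : FreeAbelianGroup (NCC G) := clsC G (ConjClasses.mk x)

/-- The subgroup generated by the elements `x̂ + x̂⁻¹`. -/
noncomputable def NSub : AddSubgroup (FreeAbelianGroup (NCC G)) :=
  AddSubgroup.closure {a | ∃ x : G, a = clsF G x + clsF G x⁻¹}

/-- The group `𝔹_G` of singular orbit data: `(ker φ) / N`. -/
noncomputable def SOD := (phi G).ker ⧸ ((NSub G).addSubgroupOf (phi G).ker)

noncomputable instance : AddCommGroup (SOD G) :=
  inferInstanceAs (AddCommGroup ((phi G).ker ⧸ ((NSub G).addSubgroupOf (phi G).ker)))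

variable {G}

lemma classAb_mk (x : G) :
    classAb G (ConjClasses.mk x) = Additive.ofMul (Abelianization.of x) := rfl

lemma mk_eq_one_iff {x : G} : ConjClasses.mk x = 1 ↔ x = 1 := by
  rw [ConjClasses.one_eq_mk_one, ConjClasses.mk_eq_mk_iff_isConj, isConj_one_left]

lemma phi_of (c : NCC G) : phi G (FreeAbelianGroup.of c) = classAb G c.1 :=
  FreeAbelianGroup.lift_apply_of _ _

lemma phi_clsF (x : G) : phi G (clsF G x) = Additive.ofMul (Abelianization.of x) := by
  rw [clsF, clsC]
  split_ifs with h
  · have hx : x = 1 := mk_eq_one_iff.mp h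
    subst hx
    simp
  · exact (phi_of (G := G) ⟨ConjClasses.mk x, h⟩).trans (classAb_mk x)

/-- The element of the free abelian group associated to a list of group elements. -/
noncomputable def sumF (l : List G) : FreeAbelianGroup (NCC G) := (l.map (clsF G)).sum

lemma sumF_nil : sumF ([] : List G) = 0 := rfl

lemma sumF_cons (a : G) (t : List G) : sumF (a :: t) = clsF G a + sumF t := by
  simp [sumF]

lemma phi_sumF (l : List G) :
    phi G (sumF l) = Additive.ofMul (Abelianization.of l.prod) := by
  induction l with
  | nil => simp [sumF_nil]
  | cons a t ih =>
    rw [sumF_cons, map_add, phi_clsF, ih, List.prod_cons, map_mul, ofMul_mul]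

lemma abOf_eq_one_iff {x : G} : Abelianization.of x = 1 ↔ x ∈ commutator G :=
  QuotientGroup.eq_one_iff x

lemma sumF_mem_ker {l : List G} (h : l.prod ∈ commutator G) : sumF l ∈ (phi G).ker := by
  rw [AddMonoidHom.mem_ker, phi_sumF, abOf_eq_one_iff.mpr h]
  rfl

/-- The singular orbit datum `[x̂₁, …, x̂_q]` associated to a list of group elements whose
product lies in the commutator subgroup. -/
noncomputable def data (l : List G) (h : l.prod ∈ commutator G) : SOD G :=
  (QuotientAddGroup.mk ⟨sumF l, sumF_mem_ker h⟩ : SOD G)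


open scoped commutatorElement

/-! ### Auxiliary machinery -/

lemma clsF_eq_of {y : G} (h : ConjClasses.mk y ≠ 1) :
    clsF G y = FreeAbelianGroup.of ⟨ConjClasses.mk y, h⟩ := dif_neg h

lemma clsF_eq_zero {y : G} (h : ConjClasses.mk y = 1) : clsF G y = 0 := dif_pos h

/-- Classical indicator function. -/
noncomputable def ind (R : Type) [Zero R] [One R] (p : Prop) : R :=
  @ite _ p (Classical.propDecidable p) 1 0

lemma ind_pos {R : Type} [Zero R] [One R] {p : Prop} (h : p) : ind R p = 1 := if_pos h

lemma ind_neg {R : Type} [Zero R] [One R] {p : Prop} (h : ¬ p) : ind R p = 0 := if_neg h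

lemma mem_nsub (x : G) : clsF G x + clsF G x⁻¹ ∈ NSub G :=
  AddSubgroup.subset_closure ⟨x, rfl⟩

lemma nsub_le_ker {A : Type} [AddCommGroup A] (f : FreeAbelianGroup (NCC G) →+ A)
    (h : ∀ x : G, f (clsF G x) + f (clsF G x⁻¹) = 0) : NSub G ≤ f.ker := by
  rw [NSub, AddSubgroup.closure_le]
  rintro a ⟨x, rfl⟩
  simpa [AddMonoidHom.mem_ker, map_add] using h x

lemma sod_ne_zero {a : FreeAbelianGroup (NCC G)} (ha : a ∈ (phi G).ker)
    (hn : a ∉ NSub G) : (QuotientAddGroup.mk ⟨a, ha⟩ : SOD G) ≠ 0 := by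
  rw [Ne, QuotientAddGroup.eq_zero_iff, AddSubgroup.mem_addSubgroupOf]
  exact hn

lemma isConj_inv {a b : G} (h : IsConj a b) : IsConj a⁻¹ b⁻¹ := by
  obtain ⟨c, hc⟩ := isConj_iff.mp h
  exact isConj_iff.mpr ⟨c, by rw [← hc]; group⟩

lemma mk_inv_eq_mk_inv {a b : G} :
    ConjClasses.mk a⁻¹ = ConjClasses.mk b⁻¹ ↔ ConjClasses.mk a = ConjClasses.mk b := by
  rw [ConjClasses.mk_eq_mk_iff_isConj, ConjClasses.mk_eq_mk_iff_isConj]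
  exact ⟨fun h => by simpa using isConj_inv h, isConj_inv⟩

lemma mk_inv_eq_one {y : G} (h : ConjClasses.mk y = 1) : ConjClasses.mk y⁻¹ = 1 := by
  rw [mk_eq_one_iff] at h ⊢
  simp [h]

/-- The `±1` functional associated to the pair of classes of `x` and `x⁻¹`. -/
noncomputable def signFun (x : G) : FreeAbelianGroup (NCC G) →+ ℤ :=
  FreeAbelianGroup.lift fun c =>
    ind ℤ (c.1 = ConjClasses.mk x) - ind ℤ (c.1 = ConjClasses.mk x⁻¹)

lemma signFun_clsF {x : G} (hx1 : x ≠ 1) (y : G) :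
    signFun x (clsF G y) =
      ind ℤ (ConjClasses.mk y = ConjClasses.mk x) -
        ind ℤ (ConjClasses.mk y = ConjClasses.mk x⁻¹) := by
  by_cases hy : ConjClasses.mk y = 1
  · rw [clsF_eq_zero hy, map_zero, hy,
      ind_neg (fun h => hx1 (mk_eq_one_iff.mp h.symm)),
      ind_neg (fun h => hx1 (by simpa using mk_eq_one_iff.mp h.symm))]
    ring
  · rw [clsF_eq_of hy]
    exact FreeAbelianGroup.lift_apply_of _ _

/-- The mod-2 indicator functional of the class of `x`. -/
noncomputable def oneFun (x : G) : FreeAbelianGroup (NCC G) →+ ZMod 2 :=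
  FreeAbelianGroup.lift fun c => ind (ZMod 2) (c.1 = ConjClasses.mk x)

lemma oneFun_clsF {x : G} (hx1 : x ≠ 1) (y : G) :
    oneFun x (clsF G y) = ind (ZMod 2) (ConjClasses.mk y = ConjClasses.mk x) := by
  by_cases hy : ConjClasses.mk y = 1
  · rw [clsF_eq_zero hy, map_zero, hy, ind_neg (fun h => hx1 (mk_eq_one_iff.mp h.symm))]
  · rw [clsF_eq_of hy]
    exact FreeAbelianGroup.lift_apply_of _ _

lemma caseA [Finite G] {x : G} (hx : ¬ IsConj x x⁻¹) : ∃ α : SOD G, α ≠ 0 := by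
  have hx1 : x ≠ 1 := by rintro rfl; exact hx (by simp)
  have hxx : ConjClasses.mk x ≠ ConjClasses.mk x⁻¹ := by
    rw [Ne, ConjClasses.mk_eq_mk_iff_isConj]; exact hx
  have hmem : (Nat.card G • clsF G x) ∈ (phi G).ker := by
    rw [AddMonoidHom.mem_ker, map_nsmul, phi_clsF, ← ofMul_pow, ← map_pow,
      pow_card_eq_one', map_one, ofMul_one]
  refine ⟨QuotientAddGroup.mk ⟨_, hmem⟩, sod_ne_zero hmem ?_⟩
  intro hmemN
  have hker : NSub G ≤ (signFun x).ker := by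
    refine nsub_le_ker _ fun y => ?_
    rw [signFun_clsF hx1, signFun_clsF hx1]
    by_cases hy : ConjClasses.mk y = 1
    · rw [hy, mk_inv_eq_one hy, ind_neg (fun h => hx1 (mk_eq_one_iff.mp h.symm)),
        ind_neg (fun h => hx1 (by simpa using mk_eq_one_iff.mp h.symm))]
      ring
    · have e1 : (ConjClasses.mk y⁻¹ = ConjClasses.mk x) ↔
          (ConjClasses.mk y = ConjClasses.mk x⁻¹) := by
        conv_lhs => rw [show x = (x⁻¹)⁻¹ by simp]
        exact mk_inv_eq_mk_inv
      have e2 : (ConjClasses.mk y⁻¹ = ConjClasses.mk x⁻¹) ↔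
          (ConjClasses.mk y = ConjClasses.mk x) := mk_inv_eq_mk_inv
      by_cases h1 : ConjClasses.mk y = ConjClasses.mk x
      · rw [ind_pos h1, ind_pos (e2.mpr h1)]
        by_cases h2 : ConjClasses.mk y = ConjClasses.mk x⁻¹
        · rw [ind_pos h2, ind_pos (e1.mpr h2)]; ring
        · rw [ind_neg h2, ind_neg (fun h => h2 (e1.mp h))]; ring
      · rw [ind_neg h1, ind_neg (fun h => h1 (e2.mp h))]
        by_cases h2 : ConjClasses.mk y = ConjClasses.mk x⁻¹
        · rw [ind_pos h2, ind_pos (e1.mpr h2)]; ring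
        · rw [ind_neg h2, ind_neg (fun h => h2 (e1.mp h))]; ring
  have h0 : signFun x (Nat.card G • clsF G x) = 0 := hker hmemN
  rw [map_nsmul, signFun_clsF hx1, ind_pos rfl, ind_neg hxx] at h0
  have : (Nat.card G : ℤ) = 0 := by simpa using h0
  exact Nat.card_pos.ne' (by exact_mod_cast this)

lemma caseB_ker (hC : ∀ u : G, ConjClasses.mk u⁻¹ = ConjClasses.mk u) {x : G} (hx1 : x ≠ 1) :
    NSub G ≤ (oneFun x).ker := by
  refine nsub_le_ker _ fun y => ?_
  rw [oneFun_clsF hx1, oneFun_clsF hx1, hC]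
  have : ∀ z : ZMod 2, z + z = 0 := by decide
  exact this _

lemma caseB1 (hC : ∀ u : G, ConjClasses.mk u⁻¹ = ConjClasses.mk u) {x : G}
    (hx1 : x ≠ 1) (hx : x ∈ commutator G) : ∃ α : SOD G, α ≠ 0 := by
  have hmem : clsF G x ∈ (phi G).ker := by
    rw [AddMonoidHom.mem_ker, phi_clsF, abOf_eq_one_iff.mpr hx, ofMul_one]
  refine ⟨QuotientAddGroup.mk ⟨_, hmem⟩, sod_ne_zero hmem ?_⟩
  intro hmemN
  have h0 : oneFun x (clsF G x) = 0 := caseB_ker hC hx1 hmemN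
  rw [oneFun_clsF hx1, ind_pos rfl] at h0
  exact one_ne_zero h0

lemma caseB2 (hC : ∀ u : G, ConjClasses.mk u⁻¹ = ConjClasses.mk u)
    (hcomm : ∀ a b : G, a * b = b * a) {x y : G}
    (hx1 : x ≠ 1) (hy1 : y ≠ 1) (hyx : y ≠ x) : ∃ α : SOD G, α ≠ 0 := by
  have hmkeq : ∀ a b : G, ConjClasses.mk a = ConjClasses.mk b → a = b := by
    intro a b h
    obtain ⟨c, hc⟩ := isConj_iff.mp (ConjClasses.mk_eq_mk_iff_isConj.mp h)
    rw [← hc, hcomm c a, mul_assoc, mul_inv_cancel, mul_one]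
  have hsq : ∀ g : G, g * g = 1 := by
    intro g
    have := hmkeq _ _ (hC g)
    calc g * g = g * g⁻¹ := by rw [this]
    _ = 1 := mul_inv_cancel g
  have hmem : clsF G x + clsF G y + clsF G (x * y) ∈ (phi G).ker := by
    rw [AddMonoidHom.mem_ker, map_add, map_add, phi_clsF, phi_clsF, phi_clsF,
      ← ofMul_mul, ← ofMul_mul, ← map_mul, ← map_mul]
    rw [show x * y * (x * y) = 1 from hsq (x * y), map_one, ofMul_one]
  refine ⟨QuotientAddGroup.mk ⟨_, hmem⟩, sod_ne_zero hmem ?_⟩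
  intro hmemN
  have h0 : oneFun x (clsF G x + clsF G y + clsF G (x * y)) = 0 := caseB_ker hC hx1 hmemN
  have hne1 : ConjClasses.mk y ≠ ConjClasses.mk x := fun h => hyx (hmkeq _ _ h)
  have hne2 : ConjClasses.mk (x * y) ≠ ConjClasses.mk x := by
    intro h
    have := hmkeq _ _ h
    exact hy1 (by simpa using congrArg (fun z => x⁻¹ * z) this)
  rw [map_add, map_add, oneFun_clsF hx1, oneFun_clsF hx1, oneFun_clsF hx1,
    ind_pos rfl, ind_neg hne1, ind_neg hne2] at h0
  norm_num at h0

lemma sod_trivial_of_subsingleton [Subsingleton G] (α : SOD G) : α = 0 := by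
  have he : ∀ a : FreeAbelianGroup (NCC G), a = 0 := by
    have hempty : IsEmpty (NCC G) := by
      refine ⟨fun c => c.2 ?_⟩
      obtain ⟨g, hg⟩ := Quotient.exists_rep c.1
      rw [← hg]
      exact mk_eq_one_iff.mpr (Subsingleton.elim g 1)
    intro a
    refine FreeAbelianGroup.induction_on a rfl (fun x => hempty.elim x)
      (fun x _ => hempty.elim x) ?_
    rintro a b rfl rfl
    simp
  induction α using QuotientAddGroup.induction_on with
  | H a =>
    change (QuotientAddGroup.mk a : (phi G).ker ⧸ ((NSub G).addSubgroupOf (phi G).ker)) = 0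
    rw [QuotientAddGroup.eq_zero_iff, AddSubgroup.mem_addSubgroupOf]
    rw [show (a : FreeAbelianGroup (NCC G)) = 0 from he _]
    exact zero_mem _

lemma sod_trivial_of_c2 (e : G ≃* Multiplicative (ZMod 2)) (α : SOD G) : α = 0 := by
  have hcomm : ∀ a b : G, a * b = b * a := fun a b =>
    e.injective (by rw [map_mul, map_mul, mul_comm])
  set x : G := e.symm (Multiplicative.ofAdd 1) with hxdef
  have hx1 : x ≠ 1 := by
    intro h
    have h2 : (Multiplicative.ofAdd (1 : ZMod 2)) = 1 := by
      rw [← map_one e, ← h, hxdef, MulEquiv.apply_symm_apply]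
    exact absurd h2 (by decide)
  have hx2 : x * x = 1 := by
    refine e.injective ?_
    rw [map_mul, map_one, hxdef, MulEquiv.apply_symm_apply]
    decide
  have hxinv : x⁻¹ = x := by
    rw [inv_eq_iff_mul_eq_one, hx2]
  have hall : ∀ g : G, g = 1 ∨ g = x := by
    intro g
    have hz : ∀ z : Multiplicative (ZMod 2), z = 1 ∨ z = Multiplicative.ofAdd 1 := by decide
    rcases hz (e g) with h | h
    · left; exact e.injective (by rw [h, map_one])
    · right
      rw [hxdef, ← h, MulEquiv.symm_apply_apply]
  have hmkx : ConjClasses.mk x ≠ 1 := fun h => hx1 (mk_eq_one_iff.mp h)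
  have huniq : ∀ c : NCC G, c = (⟨ConjClasses.mk x, hmkx⟩ : NCC G) := by
    intro c
    obtain ⟨g, hg⟩ := Quotient.exists_rep c.1
    rcases hall g with h | h
    · exact absurd (by rw [← hg, h]; exact mk_eq_one_iff.mpr rfl) c.2
    · exact Subtype.ext (by rw [← hg, h]; rfl)
  have hofx : Abelianization.of x ≠ 1 := by
    intro h
    have hxcomm : x ∈ commutator G := abOf_eq_one_iff.mp h
    have hbot : commutator G = ⊥ := by
      rw [commutator_def, Subgroup.commutator_eq_bot_iff_le_centralizer]
      intro g _
      rw [Subgroup.mem_centralizer_iff]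
      intro h' _
      exact hcomm h' g
    rw [hbot, Subgroup.mem_bot] at hxcomm
    exact hx1 hxcomm
  -- every element of the free abelian group is an integer multiple of `clsF G x`
  have hrep : ∀ a : FreeAbelianGroup (NCC G),
      a = (FreeAbelianGroup.lift (fun _ : NCC G => (1 : ℤ)) a) • clsF G x := by
    intro a
    refine FreeAbelianGroup.induction_on a (by simp) ?_ ?_ ?_
    · intro c
      rw [FreeAbelianGroup.lift_apply_of, huniq c, one_smul, clsF_eq_of hmkx]
    · intro c _
      rw [map_neg, FreeAbelianGroup.lift_apply_of, huniq c, clsF_eq_of hmkx, neg_smul, one_smul]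
    · intro a b ha hb
      rw [map_add, add_smul, ← ha, ← hb]
  induction α using QuotientAddGroup.induction_on with
  | H a =>
    change (QuotientAddGroup.mk a : (phi G).ker ⧸ ((NSub G).addSubgroupOf (phi G).ker)) = 0
    rw [QuotientAddGroup.eq_zero_iff, AddSubgroup.mem_addSubgroupOf]
    obtain ⟨a, hamem⟩ := a
    set n : ℤ := FreeAbelianGroup.lift (fun _ : NCC G => (1 : ℤ)) a with hndef
    have ha : a = n • clsF G x := hrep a
    have hphi : phi G a = 0 := hamem
    rw [ha, map_zsmul, phi_clsF, ← ofMul_zpow] at hphi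
    have hone : (Abelianization.of x : Abelianization G) ^ n = 1 := hphi
    have hsq : (Abelianization.of x : Abelianization G) ^ (2 : ℤ) = 1 := by
      rw [show (2:ℤ) = (2:ℕ) from rfl, zpow_natCast, pow_two, ← map_mul, hx2, map_one]
    have heven : ∃ k : ℤ, n = 2 * k := by
      rcases Int.even_or_odd n with ⟨k, hk⟩ | ⟨k, hk⟩
      · exact ⟨k, by omega⟩
      · exfalso
        apply hofx
        have : (Abelianization.of x) ^ n = Abelianization.of x := by
          rw [hk, zpow_add, zpow_mul, hsq, one_zpow, one_mul, zpow_one]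
        rw [this] at hone
        exact hone
    obtain ⟨k, hk⟩ := heven
    show a ∈ NSub G
    rw [ha, hk, mul_comm, mul_zsmul]
    refine AddSubgroup.zsmul_mem _ ?_ k
    have := mem_nsub (G := G) x
    rwa [hxinv, ← two_zsmul] at this

/-- `𝔹_G` is trivial if and only if `G` is trivial or `G ≅ C₂`. -/
theorem stmt14 (G : Type*) [Group G] [Finite G] :
    (∀ α : SOD G, α = 0) ↔
      (Subsingleton G ∨ Nonempty (G ≃* Multiplicative (ZMod 2))) := by
  constructor
  · intro h
    by_contra hcon
    push_neg at hcon
    obtain ⟨hns, hniso⟩ := hcon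
    obtain ⟨x, hx1⟩ := exists_ne (1 : G)
    by_cases hall : ∀ g : G, g = 1 ∨ g = x
    · refine hniso.false ?_
      have hcard : Nat.card G = 2 := by
        rw [Nat.card_eq_two_iff' (1 : G)]
        exact ⟨x, hx1, fun z hz => (hall z).resolve_left hz⟩
      haveI : Fact (Nat.Prime 2) := ⟨Nat.prime_two⟩
      exact mulEquivOfPrimeCardEq hcard (by simp [Nat.card_eq_fintype_card])
    · push_neg at hall
      obtain ⟨y, hy1, hyx⟩ := hall
      by_cases hconj : ∀ u : G, IsConj u u⁻¹
      · have hC : ∀ u : G, ConjClasses.mk u⁻¹ = ConjClasses.mk u := fun u =>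
          ConjClasses.mk_eq_mk_iff_isConj.mpr (hconj u).symm
        by_cases hcomm : ∀ a b : G, a * b = b * a
        · obtain ⟨α, hα⟩ := caseB2 hC hcomm hx1 hy1 hyx
          exact hα (h α)
        · push_neg at hcomm
          obtain ⟨a, b, hab⟩ := hcomm
          have hx0 : ⁅a, b⁆ ≠ 1 := fun hh => hab (commutatorElement_eq_one_iff_mul_comm.mp hh)
          have hx0mem : ⁅a, b⁆ ∈ commutator G := by
            rw [commutator_def]
            exact Subgroup.commutator_mem_commutator (Subgroup.mem_top a) (Subgroup.mem_top b)
          obtain ⟨α, hα⟩ := caseB1 hC hx0 hx0mem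
          exact hα (h α)
      · push_neg at hconj
        obtain ⟨u, hu⟩ := hconj
        obtain ⟨α, hα⟩ := caseA hu
        exact hα (h α)
  · rintro (hs | he) α
    · exact sod_trivial_of_subsingleton α
    · exact sod_trivial_of_c2 he.some α

end SingOrbit
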